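/- Let p ≤ q be positive integers and let f be a twice continuously differentiable real-valued function on the interval [p−1/2, q+1/2]. Then | Σ_{m=p}^{q} f(m) − ∫_{p−1/2}^{q+1/2} f(x) dx − (1/8)f'(p−1/2) + (1/8)f'(q+1/2) | ≤ (q−p+1) · sup_{p−1/2 ≤ x ≤ q+1/2} |f''(x)|. -/

import Mathlib

open Finset Set

/-- Per-interval Euler–Maclaurin-type estimate on `[c, c+1]`. -/
lemma key_interval (c : ℝ) (f f' f'' : ℝ → ℝ) (M : ℝ)
    (hf' : ∀ x ∈ Set.Icc c (c + 1), HasDerivWithinAt f (f' x) (Set.Icc c (c + 1)) x)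
    (hf'' : ∀ x ∈ Set.Icc c (c + 1), HasDerivWithinAt f' (f'' x) (Set.Icc c (c + 1)) x)
    (hM : ∀ x ∈ Set.Icc c (c + 1), |f'' x| ≤ M) :
    |f (c + 1 / 2) - (∫ x in c..(c + 1), f x) - (1 / 8) * f' c + (1 / 8) * f' (c + 1)| ≤ M := by
  have hc1 : c ≤ c + 1 := by linarith
  have hmem : ∀ x, c ≤ x → x ≤ c + 1 → x ∈ Set.Icc c (c + 1) := fun x h1 h2 => ⟨h1, h2⟩
  have hmid : c + 1 / 2 ∈ Set.Icc c (c + 1) := ⟨by linarith, by linarith⟩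
  have hMnn : 0 ≤ M := le_trans (abs_nonneg _) (hM c ⟨le_refl _, hc1⟩)
  have hconv : Convex ℝ (Set.Icc c (c + 1)) := convex_Icc _ _
  -- Lipschitz bound on f'
  have hlip : ∀ x ∈ Set.Icc c (c + 1), ∀ y ∈ Set.Icc c (c + 1), |f' y - f' x| ≤ M * |y - x| := by
    intro x hx y hy
    have := hconv.norm_image_sub_le_of_norm_hasDerivWithin_le hf''
      (fun z hz => by simpa using hM z hz) hx hy
    simpa using this
  -- bound on f' near midpoint
  have hlip' : ∀ x ∈ Set.Icc c (c + 1), |f' x - f' (c + 1 / 2)| ≤ M * (1 / 2) := by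
    intro x hx
    refine le_trans (hlip _ hmid _ hx) ?_
    have h1 : |x - (c + 1 / 2)| ≤ 1 / 2 := by
      rw [abs_le]; constructor <;> [linarith [hx.1]; linarith [hx.2]]
    exact mul_le_mul_of_nonneg_left h1 hMnn
  -- Taylor-type bound
  set g : ℝ → ℝ := fun x => f x - f' (c + 1 / 2) * x with hg
  have hgd : ∀ x ∈ Set.Icc c (c + 1),
      HasDerivWithinAt g (f' x - f' (c + 1 / 2)) (Set.Icc c (c + 1)) x := by
    intro x hx
    have h := (hasDerivWithinAt_id x (Set.Icc c (c + 1))).const_mul (f' (c + 1 / 2))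
    rw [mul_one] at h
    exact (hf' x hx).sub h
  have htaylor : ∀ x ∈ Set.Icc c (c + 1),
      |f x - f (c + 1 / 2) - f' (c + 1 / 2) * (x - (c + 1 / 2))| ≤ M / 4 := by
    intro x hx
    have := hconv.norm_image_sub_le_of_norm_hasDerivWithin_le hgd
      (fun z hz => by rw [Real.norm_eq_abs]; exact hlip' z hz) hmid hx
    have h2 : |x - (c + 1 / 2)| ≤ 1 / 2 := by
      rw [abs_le]; constructor <;> [linarith [hx.1]; linarith [hx.2]]
    have h3 : ‖g x - g (c + 1 / 2)‖ ≤ M * (1 / 2) * (1 / 2) :=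
      this.trans (mul_le_mul_of_nonneg_left (by rw [Real.norm_eq_abs]; exact h2)
        (mul_nonneg hMnn (by norm_num)))
    have h4 : g x - g (c + 1 / 2) = f x - f (c + 1 / 2) - f' (c + 1 / 2) * (x - (c + 1 / 2)) := by
      simp only [hg]; ring
    rw [Real.norm_eq_abs, h4] at h3
    linarith
  -- continuity / integrability
  have hfc : ContinuousOn f (Set.Icc c (c + 1)) := fun x hx => (hf' x hx).continuousWithinAt
  have hint : IntervalIntegrable f MeasureTheory.volume c (c + 1) :=
    (hfc.mono (by rw [Set.uIcc_of_le hc1])).intervalIntegrable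
  -- the linear part integrates to f(c+1/2)
  have hlin : (∫ x in c..(c + 1), (f (c + 1 / 2) + f' (c + 1 / 2) * (x - (c + 1 / 2)))) =
      f (c + 1 / 2) := by
    have h1 : (∫ x in c..(c + 1), (f (c + 1 / 2) + f' (c + 1 / 2) * (x - (c + 1 / 2)))) =
        (∫ x in c..(c + 1), (f (c + 1 / 2) - f' (c + 1 / 2) * (c + 1 / 2)) +
          f' (c + 1 / 2) * x) := by
      congr 1; ext x; ring
    rw [h1, intervalIntegral.integral_add (intervalIntegrable_const)
      ((by continuity : Continuous fun x : ℝ => f' (c + 1 / 2) * x).intervalIntegrable _ _),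
      intervalIntegral.integral_const, intervalIntegral.integral_const_mul,
      integral_id, smul_eq_mul]
    ring
  -- integral of remainder
  have hR : |(∫ x in c..(c + 1), f x) - f (c + 1 / 2)| ≤ M / 4 := by
    have hlinint : IntervalIntegrable
        (fun x => f (c + 1 / 2) + f' (c + 1 / 2) * (x - (c + 1 / 2)))
        MeasureTheory.volume c (c + 1) := by
      apply Continuous.intervalIntegrable; continuity
    have hsplit : (∫ x in c..(c + 1), f x) - f (c + 1 / 2) =
        ∫ x in c..(c + 1), (f x - (f (c + 1 / 2) + f' (c + 1 / 2) * (x - (c + 1 / 2)))) := by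
      rw [intervalIntegral.integral_sub hint hlinint, hlin]
    rw [hsplit]
    have := intervalIntegral.norm_integral_le_of_norm_le_const (C := M / 4)
      (a := c) (b := c + 1)
      (f := fun x => f x - (f (c + 1 / 2) + f' (c + 1 / 2) * (x - (c + 1 / 2)))) ?_
    · rw [Real.norm_eq_abs] at this
      calc _ ≤ M / 4 * |c + 1 - c| := this
        _ = M / 4 := by rw [show c + 1 - c = (1:ℝ) by ring, abs_one, mul_one]
    · intro x hx
      rw [Set.uIoc_of_le hc1] at hx
      have hx' : x ∈ Set.Icc c (c + 1) := ⟨le_of_lt hx.1, hx.2⟩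
      have := htaylor x hx'
      rw [Real.norm_eq_abs]
      calc |f x - (f (c + 1 / 2) + f' (c + 1 / 2) * (x - (c + 1 / 2)))|
          = |f x - f (c + 1 / 2) - f' (c + 1 / 2) * (x - (c + 1 / 2))| := by ring_nf
        _ ≤ M / 4 := this
  -- boundary derivative term
  have hB : |f' (c + 1) - f' c| ≤ M := by
    have := hlip c ⟨le_refl _, hc1⟩ (c + 1) ⟨hc1, le_refl _⟩
    simpa using this
  -- combine
  have heq : f (c + 1 / 2) - (∫ x in c..(c + 1), f x) - (1 / 8) * f' c + (1 / 8) * f' (c + 1)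
      = -((∫ x in c..(c + 1), f x) - f (c + 1 / 2)) + (1 / 8) * (f' (c + 1) - f' c) := by ring
  rw [heq]
  calc |(-((∫ x in c..(c + 1), f x) - f (c + 1 / 2))) + (1 / 8) * (f' (c + 1) - f' c)|
      ≤ |(-((∫ x in c..(c + 1), f x) - f (c + 1 / 2)))| + |(1 / 8) * (f' (c + 1) - f' c)| :=
        abs_add_le _ _
    _ ≤ M / 4 + (1 / 8) * M := by
        rw [abs_neg, abs_mul]
        have : |(1:ℝ) / 8| = 1 / 8 := by norm_num
        rw [this]
        exact add_le_add hR (by linarith)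
    _ ≤ M := by linarith

theorem stmt_7 (p q : ℕ) (hp : 1 ≤ p) (hpq : p ≤ q) (f f' f'' : ℝ → ℝ)
    (hf' : ∀ x ∈ Set.Icc ((p : ℝ) - 1 / 2) ((q : ℝ) + 1 / 2),
      HasDerivWithinAt f (f' x) (Set.Icc ((p : ℝ) - 1 / 2) ((q : ℝ) + 1 / 2)) x)
    (hf'' : ∀ x ∈ Set.Icc ((p : ℝ) - 1 / 2) ((q : ℝ) + 1 / 2),
      HasDerivWithinAt f' (f'' x) (Set.Icc ((p : ℝ) - 1 / 2) ((q : ℝ) + 1 / 2)) x)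
    (hcont : ContinuousOn f'' (Set.Icc ((p : ℝ) - 1 / 2) ((q : ℝ) + 1 / 2))) :
    |(∑ m ∈ Finset.Icc p q, f m) - (∫ x in ((p : ℝ) - 1 / 2)..((q : ℝ) + 1 / 2), f x)
        - (1 / 8) * f' ((p : ℝ) - 1 / 2) + (1 / 8) * f' ((q : ℝ) + 1 / 2)|
      ≤ ((q : ℝ) - p + 1) *
        sSup ((fun x => |f'' x|) '' Set.Icc ((p : ℝ) - 1 / 2) ((q : ℝ) + 1 / 2)) := by
  set a : ℝ := (p : ℝ) - 1 / 2 with ha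
  set b : ℝ := (q : ℝ) + 1 / 2 with hb
  have hab : a ≤ b := by
    have : (p : ℝ) ≤ q := Nat.cast_le.mpr hpq
    simp only [ha, hb]; linarith
  set I : Set ℝ := Set.Icc a b with hI
  set M : ℝ := sSup ((fun x => |f'' x|) '' I) with hMdef
  -- M is an upper bound for |f''| on I
  have hIne : I.Nonempty := Set.nonempty_Icc.mpr hab
  have hcomp : IsCompact I := isCompact_Icc
  have habs : ContinuousOn (fun x => |f'' x|) I := hcont.abs
  have hbdd : BddAbove ((fun x => |f'' x|) '' I) :=
    (hcomp.image_of_continuousOn habs).bddAbove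
  have hM : ∀ x ∈ I, |f'' x| ≤ M := fun x hx => le_csSup hbdd ⟨x, hx, rfl⟩
  have hMnn : 0 ≤ M := le_trans (abs_nonneg _) (hM _ hIne.some_mem)
  set n : ℕ := q + 1 - p with hn
  have hnpos : 1 ≤ n := by omega
  -- the partition points
  set A : ℕ → ℝ := fun i => a + i with hA
  have hA0 : A 0 = a := by simp [hA]
  have hAn : A n = b := by
    simp only [hA, ha, hb, hn]
    have : ((q + 1 - p : ℕ) : ℝ) = (q : ℝ) + 1 - p := by
      push_cast [Nat.cast_sub (by omega : p ≤ q + 1)]; ring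
    rw [this]; ring
  -- each subinterval is inside I
  have hsub : ∀ i < n, Set.Icc (A i) (A i + 1) ⊆ I := by
    intro i hi x hx
    have h1 : (i : ℝ) + 1 ≤ (n : ℝ) := by exact_mod_cast hi
    have h2 : a + (n : ℝ) = b := by have := hAn; simp only [hA] at this; linarith
    have h3 : (0 : ℝ) ≤ (i : ℝ) := Nat.cast_nonneg i
    have hx1 := hx.1; have hx2 := hx.2
    simp only [hA] at hx1 hx2
    exact ⟨by linarith, by linarith⟩
  -- restrict derivatives to subintervals
  have hf'i : ∀ i < n, ∀ x ∈ Set.Icc (A i) (A i + 1),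
      HasDerivWithinAt f (f' x) (Set.Icc (A i) (A i + 1)) x :=
    fun i hi x hx => (hf' x (hsub i hi hx)).mono (hsub i hi)
  have hf''i : ∀ i < n, ∀ x ∈ Set.Icc (A i) (A i + 1),
      HasDerivWithinAt f' (f'' x) (Set.Icc (A i) (A i + 1)) x :=
    fun i hi x hx => (hf'' x (hsub i hi hx)).mono (hsub i hi)
  -- per-interval estimate
  have hkey : ∀ i < n,
      |f (A i + 1 / 2) - (∫ x in (A i)..(A i + 1), f x)
        - (1 / 8) * f' (A i) + (1 / 8) * f' (A i + 1)| ≤ M :=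
    fun i hi => key_interval (A i) f f' f'' M (hf'i i hi) (hf''i i hi)
      (fun x hx => hM x (hsub i hi hx))
  -- integrability on each subinterval
  have hfc : ContinuousOn f I := fun x hx => (hf' x hx).continuousWithinAt
  have hinti : ∀ i < n, IntervalIntegrable f MeasureTheory.volume (A i) (A (i + 1)) := by
    intro i hi
    have hAi1 : A (i + 1) = A i + 1 := by simp only [hA]; push_cast; ring
    rw [hAi1]
    have hle : A i ≤ A i + 1 := by linarith
    have hss : Set.uIcc (A i) (A i + 1) ⊆ I := by
      rw [Set.uIcc_of_le hle]; exact hsub i hi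
    exact (hfc.mono hss).intervalIntegrable
  -- sum decomposition
  have hS : (∑ m ∈ Finset.Icc p q, f m) = ∑ i ∈ Finset.range n, f (A i + 1 / 2) := by
    rw [← Finset.Ico_add_one_right_eq_Icc, Finset.sum_Ico_eq_sum_range]
    apply Finset.sum_congr (by simp [hn])
    intro i _
    congr 1
    simp only [hA, ha]; push_cast; ring
  have hInt : (∫ x in a..b, f x) = ∑ i ∈ Finset.range n, ∫ x in (A i)..(A (i + 1)), f x := by
    rw [intervalIntegral.sum_integral_adjacent_intervals hinti, hA0, hAn]
  have hTel : (∑ i ∈ Finset.range n, ((1 / 8) * f' (A (i + 1)) - (1 / 8) * f' (A i)))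
      = (1 / 8) * f' b - (1 / 8) * f' a := by
    rw [Finset.sum_range_sub (fun i => (1 / 8) * f' (A i)), hA0, hAn]
  have hexp : (∑ i ∈ Finset.range n, (f (A i + 1 / 2) - (∫ x in (A i)..(A (i + 1)), f x)
        - (1 / 8) * f' (A i) + (1 / 8) * f' (A (i + 1))))
      = (∑ i ∈ Finset.range n, f (A i + 1 / 2))
        - (∑ i ∈ Finset.range n, ∫ x in (A i)..(A (i + 1)), f x)
        + ∑ i ∈ Finset.range n, ((1 / 8) * f' (A (i + 1)) - (1 / 8) * f' (A i)) := by
    rw [← Finset.sum_sub_distrib, ← Finset.sum_add_distrib]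
    exact Finset.sum_congr rfl fun i _ => by ring
  have hEq : (∑ m ∈ Finset.Icc p q, f m) - (∫ x in a..b, f x)
        - (1 / 8) * f' a + (1 / 8) * f' b
      = ∑ i ∈ Finset.range n, (f (A i + 1 / 2) - (∫ x in (A i)..(A (i + 1)), f x)
        - (1 / 8) * f' (A i) + (1 / 8) * f' (A (i + 1))) := by
    rw [hS, hInt, hexp, hTel]; ring
  rw [hEq]
  calc |∑ i ∈ Finset.range n, (f (A i + 1 / 2) - (∫ x in (A i)..(A (i + 1)), f x)
        - (1 / 8) * f' (A i) + (1 / 8) * f' (A (i + 1)))|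
      ≤ ∑ i ∈ Finset.range n, |f (A i + 1 / 2) - (∫ x in (A i)..(A (i + 1)), f x)
        - (1 / 8) * f' (A i) + (1 / 8) * f' (A (i + 1))| := Finset.abs_sum_le_sum_abs _ _
    _ ≤ ∑ i ∈ Finset.range n, M := by
        apply Finset.sum_le_sum
        intro i hi
        have hi' := Finset.mem_range.mp hi
        have hAi1 : A (i + 1) = A i + 1 := by simp only [hA]; push_cast; ring
        rw [hAi1]
        exact hkey i hi'
    _ = (n : ℝ) * M := by rw [Finset.sum_const, Finset.card_range, nsmul_eq_mul]
    _ = ((q : ℝ) - p + 1) * M := by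
        congr 1
        rw [hn]
        push_cast [Nat.cast_sub (by omega : p ≤ q + 1)]
        ring
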